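/- (Corollary 2, Unique value) Assume β_pl > 0 and β_op ≠ 0. If V_pl* : S → ℝ satisfies B_pl V_pl* = V_pl* and V_op* : S → ℝ satisfies B_op V_op* = V_op*, then V_pl*(s) = V_op*(s) for all s ∈ S; i.e., the player's and opponent's soft values coincide, so the two-player soft Q-learning game has a unique value. -/

import Mathlib

noncomputable section

/-- The probability simplex over a finite type `X`. -/
def simplex (X : Type*) [Fintype X] : Set (X → ℝ) :=
  {p | (∀ x, 0 ≤ p x) ∧ ∑ x, p x = 1}

variable {S A B : Type*} [Fintype S] [Fintype A] [Fintype B]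

/-- The free energy `f(π, σ, s, V)` of the two-player soft stochastic game: expected
one-step reward plus discounted continuation value, minus the information costs of the
player's policy `π` and the opponent's policy `σ` (convention `0·log 0 = 0` holds since
`Real.log 0 = 0`). -/
def freeEnergy (R : S → A → B → ℝ) (T : S → A → B → S → ℝ) (γ : ℝ)
    (ρpl : S → A → ℝ) (ρop : S → B → ℝ) (βpl βop : ℝ)
    (π : A → ℝ) (σ : B → ℝ) (s : S) (V : S → ℝ) : ℝ :=
  (∑ a, ∑ b, π a * σ b * (R s a b + γ * ∑ s', T s a b s' * V s'))
    - (1 / βpl) * ∑ a, π a * Real.log (π a / ρpl s a)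
    - (1 / βop) * ∑ b, σ b * Real.log (σ b / ρop s b)

/-- The extremum operator over the opponent's simplex: a supremum if `β_op > 0`
and an infimum if `β_op < 0`. -/
def extOp (βop : ℝ) (g : (B → ℝ) → ℝ) : ℝ :=
  if 0 < βop then sSup (g '' simplex B) else sInf (g '' simplex B)

/-- The player's soft Bellman operator `(B_pl V)(s) = sup_π ext_σ f(π, σ, s, V)`. -/
def Bpl (R : S → A → B → ℝ) (T : S → A → B → S → ℝ) (γ : ℝ)
    (ρpl : S → A → ℝ) (ρop : S → B → ℝ) (βpl βop : ℝ) (V : S → ℝ) (s : S) : ℝ :=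
  sSup ((fun π => extOp βop (fun σ => freeEnergy R T γ ρpl ρop βpl βop π σ s V)) '' simplex A)

/-- The opponent's soft Bellman operator `(B_op V)(s) = ext_σ sup_π f(π, σ, s, V)`. -/
def Bop (R : S → A → B → ℝ) (T : S → A → B → S → ℝ) (γ : ℝ)
    (ρpl : S → A → ℝ) (ρop : S → B → ℝ) (βpl βop : ℝ) (V : S → ℝ) (s : S) : ℝ :=
  extOp βop (fun σ => sSup ((fun π => freeEnergy R T γ ρpl ρop βpl βop π σ s V) '' simplex A))

namespace SoftAux

set_option linter.unusedSectionVars false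

open Real Finset

variable {X : Type*} [Fintype X]

lemma simplex_eq (X : Type*) [Fintype X] : simplex X = stdSimplex ℝ X := rfl

lemma simplex_nonempty [Nonempty X] : (simplex X).Nonempty :=
  ⟨fun _ => (Fintype.card X : ℝ)⁻¹, fun _ => by positivity, by
    have : (0:ℝ) < Fintype.card X := by positivity
    field_simp
    rw [Finset.sum_const, Finset.card_univ, nsmul_eq_mul]
    field_simp⟩

lemma mem_simplex_le_one {p : X → ℝ} (hp : p ∈ simplex X) (x : X) : p x ≤ 1 := by
  rw [simplex_eq] at hp
  exact (mem_Icc_of_mem_stdSimplex hp x).2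

/-- KL divergence (unnormalized reference allowed). -/
def kl (p ρ : X → ℝ) : ℝ := ∑ x, p x * Real.log (p x / ρ x)

lemma kl_eq (p : X → ℝ) {ρ : X → ℝ} (hρ : ∀ x, 0 < ρ x) :
    kl p ρ = ∑ x, (p x * Real.log (p x) - p x * Real.log (ρ x)) := by
  unfold kl
  refine Finset.sum_congr rfl fun x _ => ?_
  rcases eq_or_ne (p x) 0 with h | h
  · simp [h]
  · rw [Real.log_div h (hρ x).ne']
    ring

def gZ (c : ℝ) (q ρ : X → ℝ) : ℝ := ∑ x, ρ x * Real.exp (c * q x)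

lemma gZ_pos [Nonempty X] {c : ℝ} {q ρ : X → ℝ} (hρ : ∀ x, 0 < ρ x) : 0 < gZ c q ρ :=
  Finset.sum_pos (fun x _ => mul_pos (hρ x) (Real.exp_pos _)) univ_nonempty

def gibbs (c : ℝ) (q ρ : X → ℝ) : X → ℝ := fun x => ρ x * Real.exp (c * q x) / gZ c q ρ

lemma gibbs_pos [Nonempty X] {c : ℝ} {q ρ : X → ℝ} (hρ : ∀ x, 0 < ρ x) (x : X) :
    0 < gibbs c q ρ x := div_pos (by have := hρ x; positivity) (gZ_pos hρ)

lemma gibbs_mem [Nonempty X] {c : ℝ} {q ρ : X → ℝ} (hρ : ∀ x, 0 < ρ x) :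
    gibbs c q ρ ∈ simplex X := by
  refine ⟨fun x => (gibbs_pos hρ x).le, ?_⟩
  have hZ := gZ_pos (c := c) (q := q) hρ
  simp only [gibbs]
  rw [← Finset.sum_div]
  exact div_self hZ.ne'

/-- Gibbs' inequality against an unnormalized positive measure. -/
lemma sum_log_ge [Nonempty X] {p w : X → ℝ} (hp : p ∈ simplex X) (hw : ∀ x, 0 < w x) :
    -Real.log (∑ x, w x) ≤ ∑ x, p x * Real.log (p x / w x) := by
  obtain ⟨hp0, hp1⟩ := hp
  have hZ : 0 < ∑ x, w x := Finset.sum_pos (fun x _ => hw x) univ_nonempty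
  set Z := ∑ x, w x with hZdef
  have key : ∀ x, p x - w x / Z ≤ p x * Real.log (p x / w x) + p x * Real.log Z := by
    intro x
    rcases eq_or_lt_of_le (hp0 x) with h | h
    · simp only [← h]
      have : 0 ≤ w x / Z := le_of_lt (div_pos (hw x) hZ)
      simpa using by linarith
    · have hpw : 0 < p x / w x := div_pos h (hw x)
      have ht : 0 < w x / (p x * Z) := div_pos (hw x) (mul_pos h hZ)
      have hlog : Real.log (w x / (p x * Z)) ≤ w x / (p x * Z) - 1 :=
        Real.log_le_sub_one_of_pos ht
      have hsplit : Real.log (p x / w x) + Real.log Z = -Real.log (w x / (p x * Z)) := by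
        rw [Real.log_div h.ne' (hw x).ne', Real.log_div (hw x).ne' (mul_pos h hZ).ne',
          Real.log_mul h.ne' hZ.ne']
        ring
      have : p x * (Real.log (p x / w x) + Real.log Z) ≥ p x * (1 - w x / (p x * Z)) := by
        rw [hsplit]
        have := mul_le_mul_of_nonneg_left hlog (le_of_lt h)
        linarith
      have hrw : p x * (1 - w x / (p x * Z)) = p x - w x / Z := by
        field_simp
      linarith [hrw ▸ this]
  have hsum : ∑ x, (p x - w x / Z) ≤ ∑ x, (p x * Real.log (p x / w x) + p x * Real.log Z) :=
    Finset.sum_le_sum (fun x _ => key x)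
  have h1 : ∑ x, (p x - w x / Z) = 0 := by
    rw [Finset.sum_sub_distrib, hp1, ← Finset.sum_div, ← hZdef, div_self hZ.ne']
    ring
  have h2 : ∑ x, (p x * Real.log (p x / w x) + p x * Real.log Z)
      = (∑ x, p x * Real.log (p x / w x)) + Real.log Z := by
    rw [Finset.sum_add_distrib, ← Finset.sum_mul, hp1, one_mul]
  rw [h1, h2] at hsum
  linarith


/-- Rewrite the soft objective using the Gibbs weight `w = ρ·exp(c·q)`. -/
lemma obj_eq [Nonempty X] {c : ℝ} (hc : c ≠ 0) {p ρ : X → ℝ} (q : X → ℝ)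
    (hp : p ∈ simplex X) (hρ : ∀ x, 0 < ρ x) :
    ∑ x, p x * q x - (1/c) * kl p ρ
      = -(1/c) * ∑ x, p x * Real.log (p x / (ρ x * Real.exp (c * q x))) := by
  have hkl : kl p ρ = (∑ x, p x * Real.log (p x / (ρ x * Real.exp (c * q x))))
      + c * ∑ x, p x * q x := by
    rw [Finset.mul_sum, ← Finset.sum_add_distrib]
    refine Finset.sum_congr rfl fun x _ => ?_
    rcases eq_or_lt_of_le (hp.1 x) with h | h
    · simp [← h]
    · have hw : (0:ℝ) < ρ x * Real.exp (c * q x) := by have := hρ x; positivity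
      rw [Real.log_div h.ne' (hρ x).ne', Real.log_div h.ne' hw.ne',
        Real.log_mul (hρ x).ne' (Real.exp_ne_zero _), Real.log_exp]
      ring
  rw [hkl]
  field_simp
  ring

lemma gibbs_obj [Nonempty X] {c : ℝ} (hc : c ≠ 0) (q : X → ℝ) {ρ : X → ℝ}
    (hρ : ∀ x, 0 < ρ x) :
    ∑ x, gibbs c q ρ x * q x - (1/c) * kl (gibbs c q ρ) ρ
      = (1/c) * Real.log (gZ c q ρ) := by
  rw [obj_eq hc q (gibbs_mem hρ) hρ]
  have hZ := gZ_pos (c := c) (q := q) hρ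
  have : ∀ x, gibbs c q ρ x / (ρ x * Real.exp (c * q x)) = (gZ c q ρ)⁻¹ := by
    intro x
    have hw : (0:ℝ) < ρ x * Real.exp (c * q x) := by have := hρ x; positivity
    rw [gibbs, div_div, mul_comm (gZ c q ρ), ← div_div, div_self hw.ne']
    exact one_div _
  have h2 : ∑ x, gibbs c q ρ x * Real.log (gibbs c q ρ x / (ρ x * Real.exp (c * q x)))
      = -Real.log (gZ c q ρ) := by
    calc ∑ x, gibbs c q ρ x * Real.log (gibbs c q ρ x / (ρ x * Real.exp (c * q x)))
        = ∑ x, gibbs c q ρ x * Real.log (gZ c q ρ)⁻¹ := by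
          exact Finset.sum_congr rfl fun x _ => by rw [this x]
      _ = (∑ x, gibbs c q ρ x) * Real.log (gZ c q ρ)⁻¹ := by rw [Finset.sum_mul]
      _ = -Real.log (gZ c q ρ) := by
          rw [(gibbs_mem (c := c) (q := q) hρ).2, one_mul, Real.log_inv]
  rw [h2]
  ring

lemma obj_le [Nonempty X] {c : ℝ} (hc : 0 < c) {p ρ : X → ℝ} (q : X → ℝ)
    (hp : p ∈ simplex X) (hρ : ∀ x, 0 < ρ x) :
    ∑ x, p x * q x - (1/c) * kl p ρ ≤ (1/c) * Real.log (gZ c q ρ) := by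
  rw [obj_eq hc.ne' q hp hρ]
  have h := sum_log_ge hp (w := fun x => ρ x * Real.exp (c * q x))
    (fun x => by have := hρ x; positivity)
  have h1c : (0:ℝ) < 1/c := by positivity
  have := mul_le_mul_of_nonneg_left h h1c.le
  rw [gZ]
  nlinarith [this]

lemma obj_ge [Nonempty X] {c : ℝ} (hc : c < 0) {p ρ : X → ℝ} (q : X → ℝ)
    (hp : p ∈ simplex X) (hρ : ∀ x, 0 < ρ x) :
    (1/c) * Real.log (gZ c q ρ) ≤ ∑ x, p x * q x - (1/c) * kl p ρ := by
  rw [obj_eq hc.ne q hp hρ]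
  have h := sum_log_ge hp (w := fun x => ρ x * Real.exp (c * q x))
    (fun x => by have := hρ x; positivity)
  have h1c : 1/c < (0:ℝ) := by exact div_neg_of_pos_of_neg one_pos hc
  rw [gZ]
  nlinarith [h]


lemma isGreatest_soft [Nonempty X] {c : ℝ} (hc : 0 < c) (q : X → ℝ) {ρ : X → ℝ}
    (hρ : ∀ x, 0 < ρ x) (C0 : ℝ) :
    IsGreatest ((fun p => ∑ x, p x * q x - (1/c) * kl p ρ + C0) '' simplex X)
      ((1/c) * Real.log (gZ c q ρ) + C0) := by
  constructor
  · exact ⟨gibbs c q ρ, gibbs_mem hρ, by simp only []; rw [gibbs_obj hc.ne' q hρ]⟩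
  · rintro y ⟨p, hp, rfl⟩
    have := obj_le hc q hp hρ
    linarith

lemma isLeast_soft [Nonempty X] {c : ℝ} (hc : c < 0) (q : X → ℝ) {ρ : X → ℝ}
    (hρ : ∀ x, 0 < ρ x) (C0 : ℝ) :
    IsLeast ((fun p => ∑ x, p x * q x - (1/c) * kl p ρ + C0) '' simplex X)
      ((1/c) * Real.log (gZ c q ρ) + C0) := by
  constructor
  · exact ⟨gibbs c q ρ, gibbs_mem hρ, by simp only []; rw [gibbs_obj hc.ne q hρ]⟩
  · rintro y ⟨p, hp, rfl⟩
    have := obj_ge hc q hp hρ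
    linarith

lemma kl_nonneg [Nonempty X] {p ρ : X → ℝ} (hp : p ∈ simplex X) (hρ : ∀ x, 0 < ρ x)
    (hρ1 : ∑ x, ρ x = 1) : 0 ≤ kl p ρ := by
  have := sum_log_ge hp hρ
  rw [hρ1] at this
  simpa [kl] using this

lemma ρ_le_one {ρ : X → ℝ} (hρ : ∀ x, 0 < ρ x) (hρ1 : ∑ x, ρ x = 1) (x : X) : ρ x ≤ 1 := by
  rw [← hρ1]
  exact Finset.single_le_sum (fun y _ => (hρ y).le) (Finset.mem_univ x)

lemma kl_le [Nonempty X] {p ρ : X → ℝ} (hp : p ∈ simplex X) (hρ : ∀ x, 0 < ρ x)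
    (hρ1 : ∑ x, ρ x = 1) : kl p ρ ≤ ∑ x, -Real.log (ρ x) := by
  refine Finset.sum_le_sum fun x _ => ?_
  have hρx := hρ x
  have hρ1x : Real.log (ρ x) ≤ 0 := Real.log_nonpos hρx.le (ρ_le_one hρ hρ1 x)
  rcases eq_or_lt_of_le (hp.1 x) with h | h
  · simp [← h]; linarith
  · have hple : p x ≤ 1 := mem_simplex_le_one hp x
    have : Real.log (p x / ρ x) = Real.log (p x) - Real.log (ρ x) :=
      Real.log_div h.ne' hρx.ne'
    rw [this]
    have hlp : Real.log (p x) ≤ 0 := Real.log_nonpos h.le hple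
    nlinarith

lemma kl_abs_le [Nonempty X] {p ρ : X → ℝ} (hp : p ∈ simplex X) (hρ : ∀ x, 0 < ρ x)
    (hρ1 : ∑ x, ρ x = 1) : |kl p ρ| ≤ ∑ x, -Real.log (ρ x) :=
  abs_le.2 ⟨by
    have h := kl_nonneg hp hρ hρ1
    have h2 : (0:ℝ) ≤ ∑ x, -Real.log (ρ x) :=
      Finset.sum_nonneg fun x _ => by
        have := Real.log_nonpos (hρ x).le (ρ_le_one hρ hρ1 x); linarith
    linarith, kl_le hp hρ hρ1⟩


lemma kl_segment {σ1 σ2 ρ : X → ℝ} (hρ : ∀ x, 0 < ρ x) (h1 : σ1 ∈ simplex X)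
    (h2 : σ2 ∈ simplex X) {t : ℝ} (ht0 : 0 ≤ t) (ht1 : t ≤ 1) :
    kl (fun x => σ1 x + t * (σ2 x - σ1 x)) ρ
      ≤ (1 - t) * kl σ1 ρ + t * kl σ2 ρ := by
  rw [kl_eq _ hρ, kl_eq _ hρ, kl_eq _ hρ]
  rw [Finset.mul_sum, Finset.mul_sum, ← Finset.sum_add_distrib]
  refine Finset.sum_le_sum fun x _ => ?_
  have hc := Real.convexOn_mul_log.2 (Set.mem_Ici.2 (h1.1 x)) (Set.mem_Ici.2 (h2.1 x))
      (by linarith : (0:ℝ) ≤ 1 - t) ht0 (by ring)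
  simp only [smul_eq_mul] at hc
  have he : σ1 x + t * (σ2 x - σ1 x) = (1 - t) * σ1 x + t * σ2 x := by ring
  rw [he]
  nlinarith [hc]

section Helpers

lemma csSup_le_csSup_add {α : Type*} {s : Set α} (hs : s.Nonempty) {g h : α → ℝ} {ε : ℝ}
    (hb : BddAbove (h '' s)) (hle : ∀ x ∈ s, g x ≤ h x + ε) :
    sSup (g '' s) ≤ sSup (h '' s) + ε := by
  refine csSup_le (Set.Nonempty.image g hs) ?_
  rintro y ⟨x, hx, rfl⟩
  have h1 : h x ≤ sSup (h '' s) := le_csSup hb ⟨x, hx, rfl⟩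
  linarith [hle x hx]

lemma csInf_le_csInf_add {α : Type*} {s : Set α} (hs : s.Nonempty) {g h : α → ℝ} {ε : ℝ}
    (hb : BddBelow (g '' s)) (hle : ∀ x ∈ s, g x ≤ h x + ε) :
    sInf (g '' s) ≤ sInf (h '' s) + ε := by
  have : sInf (g '' s) - ε ≤ sInf (h '' s) := by
    refine le_csInf (Set.Nonempty.image h hs) ?_
    rintro y ⟨x, hx, rfl⟩
    have h1 : sInf (g '' s) ≤ g x := csInf_le hb ⟨x, hx, rfl⟩
    linarith [hle x hx]
  linarith

lemma abs_csSup_le {α : Type*} {s : Set α} (hs : s.Nonempty) {g : α → ℝ} {C : ℝ}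
    (hC : ∀ x ∈ s, |g x| ≤ C) : |sSup (g '' s)| ≤ C := by
  obtain ⟨x0, hx0⟩ := hs
  have hb : BddAbove (g '' s) := ⟨C, by rintro y ⟨x, hx, rfl⟩; exact (abs_le.1 (hC x hx)).2⟩
  rw [abs_le]
  constructor
  · linarith [le_csSup hb (⟨x0, hx0, rfl⟩ : g x0 ∈ g '' s), (abs_le.1 (hC x0 hx0)).1]
  · exact csSup_le (Set.Nonempty.image g ⟨x0, hx0⟩)
      (by rintro y ⟨x, hx, rfl⟩; exact (abs_le.1 (hC x hx)).2)

lemma abs_csInf_le {α : Type*} {s : Set α} (hs : s.Nonempty) {g : α → ℝ} {C : ℝ}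
    (hC : ∀ x ∈ s, |g x| ≤ C) : |sInf (g '' s)| ≤ C := by
  obtain ⟨x0, hx0⟩ := hs
  have hb : BddBelow (g '' s) := ⟨-C, by rintro y ⟨x, hx, rfl⟩; exact (abs_le.1 (hC x hx)).1⟩
  rw [abs_le]
  constructor
  · refine le_csInf (Set.Nonempty.image g ⟨x0, hx0⟩) ?_
    rintro y ⟨x, hx, rfl⟩
    exact (abs_le.1 (hC x hx)).1
  · linarith [csInf_le hb (⟨x0, hx0, rfl⟩ : g x0 ∈ g '' s), (abs_le.1 (hC x0 hx0)).2]

variable {B : Type*} [Fintype B] [Nonempty B]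

lemma abs_extOp_le {βop : ℝ} {g : (B → ℝ) → ℝ} {C : ℝ}
    (hC : ∀ σ ∈ simplex B, |g σ| ≤ C) : |extOp βop g| ≤ C := by
  unfold extOp
  split_ifs
  · exact abs_csSup_le simplex_nonempty hC
  · exact abs_csInf_le simplex_nonempty hC

lemma extOp_le_extOp_add {βop ε : ℝ} {g h : (B → ℝ) → ℝ}
    (hgb : BddBelow (g '' simplex B)) (hhb : BddAbove (h '' simplex B))
    (hle : ∀ σ ∈ simplex B, g σ ≤ h σ + ε) : extOp βop g ≤ extOp βop h + ε := by
  unfold extOp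
  split_ifs
  · exact csSup_le_csSup_add simplex_nonempty hhb hle
  · exact csInf_le_csInf_add simplex_nonempty hgb hle

end Helpers

section Game

variable {S A B : Type*} [Fintype S] [Fintype A] [Fintype B]

/-- State-action value. -/
def Qf (R : S → A → B → ℝ) (T : S → A → B → S → ℝ) (γ : ℝ) (V : S → ℝ)
    (s : S) (a : A) (b : B) : ℝ :=
  R s a b + γ * ∑ s', T s a b s' * V s'

lemma freeEnergy_sigma (R : S → A → B → ℝ) (T : S → A → B → S → ℝ) (γ : ℝ)
    (ρpl : S → A → ℝ) (ρop : S → B → ℝ) (βpl βop : ℝ)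
    (pp : A → ℝ) (σ : B → ℝ) (s : S) (V : S → ℝ) :
    freeEnergy R T γ ρpl ρop βpl βop pp σ s V
      = ∑ b, σ b * (∑ a, pp a * Qf R T γ V s a b) - (1/βop) * kl σ (ρop s)
        + (-((1/βpl) * kl pp (ρpl s))) := by
  have h1 : ∑ b, σ b * (∑ a, pp a * Qf R T γ V s a b)
      = ∑ a, ∑ b, pp a * σ b * Qf R T γ V s a b := by
    rw [Finset.sum_comm]
    refine Finset.sum_congr rfl fun b _ => ?_
    rw [Finset.mul_sum]
    exact Finset.sum_congr rfl fun a _ => by ring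
  rw [h1]
  unfold freeEnergy Qf kl
  ring

lemma freeEnergy_pi (R : S → A → B → ℝ) (T : S → A → B → S → ℝ) (γ : ℝ)
    (ρpl : S → A → ℝ) (ρop : S → B → ℝ) (βpl βop : ℝ)
    (pp : A → ℝ) (σ : B → ℝ) (s : S) (V : S → ℝ) :
    freeEnergy R T γ ρpl ρop βpl βop pp σ s V
      = ∑ a, pp a * (∑ b, σ b * Qf R T γ V s a b) - (1/βpl) * kl pp (ρpl s)
        + (-((1/βop) * kl σ (ρop s))) := by
  have h1 : ∑ a, pp a * (∑ b, σ b * Qf R T γ V s a b)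
      = ∑ a, ∑ b, pp a * σ b * Qf R T γ V s a b := by
    refine Finset.sum_congr rfl fun a _ => ?_
    rw [Finset.mul_sum]
    exact Finset.sum_congr rfl fun b _ => by ring
  rw [h1]
  unfold freeEnergy Qf kl
  ring

/-- Uniform bound on the free energy over the simplices. -/
def Cbig (R : S → A → B → ℝ) (T : S → A → B → S → ℝ) (γ : ℝ)
    (ρpl : S → A → ℝ) (ρop : S → B → ℝ) (βpl βop : ℝ) (V : S → ℝ) (s : S) : ℝ :=
  (∑ a, ∑ b, |Qf R T γ V s a b|) + |1/βpl| * (∑ a, -Real.log (ρpl s a))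
    + |1/βop| * (∑ b, -Real.log (ρop s b))

lemma freeEnergy_abs_le [Nonempty A] [Nonempty B]
    (R : S → A → B → ℝ) (T : S → A → B → S → ℝ) (γ : ℝ)
    {ρpl : S → A → ℝ} {ρop : S → B → ℝ} (βpl βop : ℝ)
    {pp : A → ℝ} {σ : B → ℝ} (s : S) (V : S → ℝ)
    (hρpl : ∀ a, 0 < ρpl s a) (hρpl1 : ∑ a, ρpl s a = 1)
    (hρop : ∀ b, 0 < ρop s b) (hρop1 : ∑ b, ρop s b = 1)
    (hpp : pp ∈ simplex A) (hσ : σ ∈ simplex B) :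
    |freeEnergy R T γ ρpl ρop βpl βop pp σ s V| ≤ Cbig R T γ ρpl ρop βpl βop V s := by
  have hX : |∑ a, ∑ b, pp a * σ b * Qf R T γ V s a b|
      ≤ ∑ a, ∑ b, |Qf R T γ V s a b| := by
    refine (Finset.abs_sum_le_sum_abs _ _).trans (Finset.sum_le_sum fun a _ => ?_)
    refine (Finset.abs_sum_le_sum_abs _ _).trans (Finset.sum_le_sum fun b _ => ?_)
    rw [abs_mul, abs_mul, abs_of_nonneg (hpp.1 a), abs_of_nonneg (hσ.1 b)]
    have hm : pp a * σ b ≤ 1 :=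
      mul_le_one₀ (mem_simplex_le_one hpp a) (hσ.1 b) (mem_simplex_le_one hσ b)
    nlinarith [abs_nonneg (Qf R T γ V s a b), mul_nonneg (hpp.1 a) (hσ.1 b), hm]
  have hkl1 : |(1/βpl) * kl pp (ρpl s)| ≤ |1/βpl| * (∑ a, -Real.log (ρpl s a)) := by
    rw [abs_mul]
    exact mul_le_mul_of_nonneg_left (kl_abs_le hpp hρpl hρpl1) (abs_nonneg _)
  have hkl2 : |(1/βop) * kl σ (ρop s)| ≤ |1/βop| * (∑ b, -Real.log (ρop s b)) := by
    rw [abs_mul]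
    exact mul_le_mul_of_nonneg_left (kl_abs_le hσ hρop hρop1) (abs_nonneg _)
  have t : ∀ x y : ℝ, |x - y| ≤ |x| + |y| := fun x y => by
    rw [sub_eq_add_neg]; simpa using abs_add_le x (-y)
  have e : freeEnergy R T γ ρpl ρop βpl βop pp σ s V
      = (∑ a, ∑ b, pp a * σ b * Qf R T γ V s a b)
        - (1/βpl) * kl pp (ρpl s) - (1/βop) * kl σ (ρop s) := rfl
  rw [e]
  unfold Cbig
  linarith [t ((∑ a, ∑ b, pp a * σ b * Qf R T γ V s a b)
      - (1/βpl) * kl pp (ρpl s)) ((1/βop) * kl σ (ρop s)),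
    t (∑ a, ∑ b, pp a * σ b * Qf R T γ V s a b) ((1/βpl) * kl pp (ρpl s)), hX, hkl1, hkl2]


/-- Soft extremum closed form for `extOp`. -/
lemma extOp_soft [Nonempty B] {c : ℝ} (hc : c ≠ 0) (q : B → ℝ) {ρ : B → ℝ}
    (hρ : ∀ b, 0 < ρ b) (C0 : ℝ) :
    extOp c (fun σ => ∑ b, σ b * q b - (1/c) * kl σ ρ + C0)
      = (1/c) * Real.log (gZ c q ρ) + C0 := by
  unfold extOp
  rcases hc.lt_or_gt with h | h
  · rw [if_neg (not_lt.2 h.le), (isLeast_soft h q hρ C0).csInf_eq]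
  · rw [if_pos h, (isGreatest_soft h q hρ C0).csSup_eq]

/-- Player's averaged value. -/
def Lf (R : S → A → B → ℝ) (T : S → A → B → S → ℝ) (γ : ℝ) (V : S → ℝ) (s : S)
    (p : A → ℝ) : B → ℝ := fun b => ∑ a, p a * Qf R T γ V s a b

/-- Opponent's averaged value. -/
def Kf (R : S → A → B → ℝ) (T : S → A → B → S → ℝ) (γ : ℝ) (V : S → ℝ) (s : S)
    (σ : B → ℝ) : A → ℝ := fun a => ∑ b, σ b * Qf R T γ V s a b

/-- The player's marginal objective after the opponent's extremum. -/
def Φf (R : S → A → B → ℝ) (T : S → A → B → S → ℝ) (γ : ℝ)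
    (ρpl : S → A → ℝ) (ρop : S → B → ℝ) (βpl βop : ℝ) (V : S → ℝ) (s : S)
    (p : A → ℝ) : ℝ :=
  (1/βop) * Real.log (gZ βop (Lf R T γ V s p) (ρop s)) + (-((1/βpl) * kl p (ρpl s)))

/-- The opponent's marginal objective after the player's supremum. -/
def Ψf (R : S → A → B → ℝ) (T : S → A → B → S → ℝ) (γ : ℝ)
    (ρpl : S → A → ℝ) (ρop : S → B → ℝ) (βpl βop : ℝ) (V : S → ℝ) (s : S)
    (σ : B → ℝ) : ℝ :=
  (1/βpl) * Real.log (gZ βpl (Kf R T γ V s σ) (ρpl s)) + (-((1/βop) * kl σ (ρop s)))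

variable [Nonempty A] [Nonempty B]

lemma sigma_fun_eq (R : S → A → B → ℝ) (T : S → A → B → S → ℝ) (γ : ℝ)
    (ρpl : S → A → ℝ) (ρop : S → B → ℝ) (βpl βop : ℝ) (p : A → ℝ) (s : S) (V : S → ℝ) :
    (fun σ => freeEnergy R T γ ρpl ρop βpl βop p σ s V)
      = fun σ : B → ℝ => ∑ b, σ b * Lf R T γ V s p b - (1/βop) * kl σ (ρop s)
          + (-((1/βpl) * kl p (ρpl s))) :=
  funext fun σ => freeEnergy_sigma R T γ ρpl ρop βpl βop p σ s V

lemma pi_fun_eq (R : S → A → B → ℝ) (T : S → A → B → S → ℝ) (γ : ℝ)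
    (ρpl : S → A → ℝ) (ρop : S → B → ℝ) (βpl βop : ℝ) (σ : B → ℝ) (s : S) (V : S → ℝ) :
    (fun p => freeEnergy R T γ ρpl ρop βpl βop p σ s V)
      = fun p : A → ℝ => ∑ a, p a * Kf R T γ V s σ a - (1/βpl) * kl p (ρpl s)
          + (-((1/βop) * kl σ (ρop s))) :=
  funext fun p => freeEnergy_pi R T γ ρpl ρop βpl βop p σ s V

lemma extOp_freeEnergy (R : S → A → B → ℝ) (T : S → A → B → S → ℝ) (γ : ℝ)
    {ρpl : S → A → ℝ} {ρop : S → B → ℝ} (βpl : ℝ) {βop : ℝ} (hβop : βop ≠ 0)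
    (V : S → ℝ) (s : S) (hρop : ∀ b, 0 < ρop s b) (p : A → ℝ) :
    extOp βop (fun σ => freeEnergy R T γ ρpl ρop βpl βop p σ s V)
      = Φf R T γ ρpl ρop βpl βop V s p := by
  rw [sigma_fun_eq]
  exact extOp_soft hβop (Lf R T γ V s p) hρop _

lemma sSup_freeEnergy (R : S → A → B → ℝ) (T : S → A → B → S → ℝ) (γ : ℝ)
    {ρpl : S → A → ℝ} {ρop : S → B → ℝ} {βpl : ℝ} (hβpl : 0 < βpl) (βop : ℝ)
    (V : S → ℝ) (s : S) (hρpl : ∀ a, 0 < ρpl s a) (σ : B → ℝ) :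
    sSup ((fun p => freeEnergy R T γ ρpl ρop βpl βop p σ s V) '' simplex A)
      = Ψf R T γ ρpl ρop βpl βop V s σ := by
  rw [pi_fun_eq]
  exact (isGreatest_soft hβpl (Kf R T γ V s σ) hρpl _).csSup_eq

lemma pi_greatest (R : S → A → B → ℝ) (T : S → A → B → S → ℝ) (γ : ℝ)
    {ρpl : S → A → ℝ} {ρop : S → B → ℝ} {βpl : ℝ} (hβpl : 0 < βpl) (βop : ℝ)
    (V : S → ℝ) (s : S) (hρpl : ∀ a, 0 < ρpl s a) (σ : B → ℝ) :
    IsGreatest ((fun p => freeEnergy R T γ ρpl ρop βpl βop p σ s V) '' simplex A)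
      (Ψf R T γ ρpl ρop βpl βop V s σ) := by
  rw [pi_fun_eq]
  exact isGreatest_soft hβpl (Kf R T γ V s σ) hρpl _

lemma sigma_least (R : S → A → B → ℝ) (T : S → A → B → S → ℝ) (γ : ℝ)
    {ρpl : S → A → ℝ} {ρop : S → B → ℝ} (βpl : ℝ) {βop : ℝ} (hβop : βop < 0)
    (V : S → ℝ) (s : S) (hρop : ∀ b, 0 < ρop s b) (p : A → ℝ) :
    IsLeast ((fun σ => freeEnergy R T γ ρpl ρop βpl βop p σ s V) '' simplex B)
      (Φf R T γ ρpl ρop βpl βop V s p) := by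
  rw [sigma_fun_eq]
  exact isLeast_soft hβop (Lf R T γ V s p) hρop _

/-- The Bellman operators in marginal form. -/
lemma Bpl_eq (R : S → A → B → ℝ) (T : S → A → B → S → ℝ) (γ : ℝ)
    {ρpl : S → A → ℝ} {ρop : S → B → ℝ} (βpl : ℝ) {βop : ℝ} (hβop : βop ≠ 0)
    (V : S → ℝ) (s : S) (hρop : ∀ b, 0 < ρop s b) :
    Bpl R T γ ρpl ρop βpl βop V s
      = sSup (Φf R T γ ρpl ρop βpl βop V s '' simplex A) := by
  unfold Bpl
  congr 1
  exact congrArg (· '' simplex A)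
    (funext fun p => extOp_freeEnergy R T γ βpl hβop V s hρop p)

lemma Bop_eq (R : S → A → B → ℝ) (T : S → A → B → S → ℝ) (γ : ℝ)
    {ρpl : S → A → ℝ} {ρop : S → B → ℝ} {βpl : ℝ} (hβpl : 0 < βpl) (βop : ℝ)
    (V : S → ℝ) (s : S) (hρpl : ∀ a, 0 < ρpl s a) :
    Bop R T γ ρpl ρop βpl βop V s
      = extOp βop (Ψf R T γ ρpl ρop βpl βop V s) := by
  unfold Bop
  congr 1
  exact funext fun σ => sSup_freeEnergy R T γ hβpl βop V s hρpl σ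


lemma Bpl_eq_Bop [Nonempty S] (R : S → A → B → ℝ) (T : S → A → B → S → ℝ) (γ : ℝ)
    {ρpl : S → A → ℝ} {ρop : S → B → ℝ}
    (hρpl : ∀ s a, 0 < ρpl s a) (hρpl1 : ∀ s, ∑ a, ρpl s a = 1)
    (hρop : ∀ s b, 0 < ρop s b) (hρop1 : ∀ s, ∑ b, ρop s b = 1)
    {βpl βop : ℝ} (hβpl : 0 < βpl) (hβop : βop ≠ 0)
    (V : S → ℝ) (s : S) :
    Bpl R T γ ρpl ρop βpl βop V s = Bop R T γ ρpl ρop βpl βop V s := by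
  have hρopS : ∀ b, 0 < ρop s b := hρop s
  have hρplS : ∀ a, 0 < ρpl s a := hρpl s
  have hFC : ∀ p ∈ simplex A, ∀ σ ∈ simplex B,
      |freeEnergy R T γ ρpl ρop βpl βop p σ s V| ≤ Cbig R T γ ρpl ρop βpl βop V s :=
    fun p hp σ hσ =>
      freeEnergy_abs_le R T γ βpl βop s V hρplS (hρpl1 s) hρopS (hρop1 s) hp hσ
  have hΦeq : ∀ p : A → ℝ, extOp βop (fun σ => freeEnergy R T γ ρpl ρop βpl βop p σ s V)
      = Φf R T γ ρpl ρop βpl βop V s p := extOp_freeEnergy R T γ βpl hβop V s hρopS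
  have hΨeq : ∀ σ : B → ℝ,
      sSup ((fun p => freeEnergy R T γ ρpl ρop βpl βop p σ s V) '' simplex A)
      = Ψf R T γ ρpl ρop βpl βop V s σ := sSup_freeEnergy R T γ hβpl βop V s hρplS
  have hΦC : ∀ p ∈ simplex A,
      |Φf R T γ ρpl ρop βpl βop V s p| ≤ Cbig R T γ ρpl ρop βpl βop V s := fun p hp => by
    rw [← hΦeq p]; exact abs_extOp_le (fun σ hσ => hFC p hp σ hσ)
  have hΨC : ∀ σ ∈ simplex B,
      |Ψf R T γ ρpl ρop βpl βop V s σ| ≤ Cbig R T γ ρpl ρop βpl βop V s := fun σ hσ => by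
    rw [← hΨeq σ]; exact abs_csSup_le simplex_nonempty (fun p hp => hFC p hp σ hσ)
  have bddΦ : BddAbove (Φf R T γ ρpl ρop βpl βop V s '' simplex A) :=
    ⟨Cbig R T γ ρpl ρop βpl βop V s, by
      rintro y ⟨p, hp, rfl⟩; exact (abs_le.1 (hΦC p hp)).2⟩
  have bddΨa : BddAbove (Ψf R T γ ρpl ρop βpl βop V s '' simplex B) :=
    ⟨Cbig R T γ ρpl ρop βpl βop V s, by
      rintro y ⟨σ, hσ, rfl⟩; exact (abs_le.1 (hΨC σ hσ)).2⟩
  rw [Bpl_eq R T γ βpl hβop V s hρopS, Bop_eq R T γ hβpl βop V s hρplS]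
  rcases hβop.lt_or_gt with hneg | hpos
  · -- βop < 0 : minimax via a Danskin-type argument
    unfold extOp
    rw [if_neg (not_lt.2 hneg.le)]
    apply le_antisymm
    · refine csSup_le (Set.Nonempty.image _ simplex_nonempty) ?_
      rintro y ⟨p, hp, rfl⟩
      refine le_csInf (Set.Nonempty.image _ simplex_nonempty) ?_
      rintro y' ⟨σ, hσ, rfl⟩
      have h1 : Φf R T γ ρpl ρop βpl βop V s p ≤ freeEnergy R T γ ρpl ρop βpl βop p σ s V :=
        (sigma_least R T γ βpl hneg V s hρopS p).2 ⟨σ, hσ, rfl⟩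
      have h2 : freeEnergy R T γ ρpl ρop βpl βop p σ s V ≤ Ψf R T γ ρpl ρop βpl βop V s σ :=
        (pi_greatest R T γ hβpl βop V s hρplS σ).2 ⟨p, hp, rfl⟩
      linarith
    · -- hard direction
      have hcomp : IsCompact (simplex B) := by
        rw [simplex_eq]; exact isCompact_stdSimplex ℝ B
      have hKcont : ∀ a, Continuous fun σ : B → ℝ => Kf R T γ V s σ a := fun a =>
        continuous_finset_sum _ fun b _ => (continuous_apply b).mul continuous_const
      have hgZpos : ∀ σ : B → ℝ, 0 < gZ βpl (Kf R T γ V s σ) (ρpl s) := fun σ => gZ_pos hρplS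
      have hgZcont : Continuous fun σ : B → ℝ => gZ βpl (Kf R T γ V s σ) (ρpl s) := by
        unfold gZ
        exact continuous_finset_sum _ fun a _ =>
          continuous_const.mul (Real.continuous_exp.comp (continuous_const.mul (hKcont a)))
      have hklcont : Continuous fun σ : B → ℝ => kl σ (ρop s) := by
        have he : (fun σ : B → ℝ => kl σ (ρop s))
            = fun σ => ∑ b, (σ b * Real.log (σ b) - σ b * Real.log (ρop s b)) :=
          funext fun σ => kl_eq σ hρopS
        rw [he]
        exact continuous_finset_sum _ fun b _ =>
          (Real.continuous_mul_log.comp (continuous_apply b)).sub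
            ((continuous_apply b).mul continuous_const)
      have hΨcont : Continuous (Ψf R T γ ρpl ρop βpl βop V s) := by
        unfold Ψf
        exact (continuous_const.mul (hgZcont.log fun σ => (hgZpos σ).ne')).add
          ((continuous_const.mul hklcont).neg)
      obtain ⟨σs, hσs, hmin⟩ := hcomp.exists_isMinOn simplex_nonempty hΨcont.continuousOn
      set ps : A → ℝ := gibbs βpl (Kf R T γ V s σs) (ρpl s) with hps
      have hps_mem : ps ∈ simplex A := gibbs_mem hρplS
      set σ' : B → ℝ := gibbs βop (Lf R T γ V s ps) (ρop s) with hσ'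
      have hσ'_mem : σ' ∈ simplex B := gibbs_mem hρopS
      have att_pi : ∀ σ : B → ℝ, freeEnergy R T γ ρpl ρop βpl βop
          (gibbs βpl (Kf R T γ V s σ) (ρpl s)) σ s V
          = Ψf R T γ ρpl ρop βpl βop V s σ := by
        intro σ
        have hg := gibbs_obj (c := βpl) hβpl.ne' (Kf R T γ V s σ) hρplS
        rw [freeEnergy_pi]
        unfold Ψf
        have h2 : ∑ a, gibbs βpl (Kf R T γ V s σ) (ρpl s) a * (∑ b, σ b * Qf R T γ V s a b)
            = ∑ a, gibbs βpl (Kf R T γ V s σ) (ρpl s) a * Kf R T γ V s σ a := rfl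
        rw [h2]
        linarith [hg]
      have att_sigma : freeEnergy R T γ ρpl ρop βpl βop ps σ' s V
          = Φf R T γ ρpl ρop βpl βop V s ps := by
        have hg := gibbs_obj (c := βop) hβop (Lf R T γ V s ps) hρopS
        rw [← hσ'] at hg
        rw [freeEnergy_sigma]
        unfold Φf
        have h2 : ∑ b, σ' b * (∑ a, ps a * Qf R T γ V s a b)
            = ∑ b, σ' b * Lf R T γ V s ps b := rfl
        rw [h2]
        linarith [hg]
      have hσt_mem : ∀ t : ℝ, 0 ≤ t → t ≤ 1 →
          (fun b => σs b + t * (σ' b - σs b)) ∈ simplex B := by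
        intro t ht0 ht1
        constructor
        · intro b
          have h1 := hσs.1 b; have h2 := hσ'_mem.1 b
          show 0 ≤ σs b + t * (σ' b - σs b)
          nlinarith [mul_nonneg (by linarith : (0:ℝ) ≤ 1 - t) h1, mul_nonneg ht0 h2]
        · have he : ∑ b, (σs b + t * (σ' b - σs b))
              = (∑ b, σs b) + t * ((∑ b, σ' b) - (∑ b, σs b)) := by
            rw [Finset.sum_add_distrib, ← Finset.mul_sum, Finset.sum_sub_distrib]
          rw [he, hσs.2, hσ'_mem.2]; ring
      set pt : ℝ → A → ℝ := fun t =>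
        gibbs βpl (Kf R T γ V s (fun b => σs b + t * (σ' b - σs b))) (ρpl s) with hptdef
      set G : ℝ → ℝ := fun t =>
        (∑ b, (σ' b - σs b) * (∑ a, pt t a * Qf R T γ V s a b))
          + (-(1/βop)) * (kl σ' (ρop s) - kl σs (ρop s)) with hGdef
      have hd : (0:ℝ) ≤ -(1/βop) := by
        have : 1/βop < 0 := div_neg_of_pos_of_neg one_pos hneg
        linarith
      have hGpos : ∀ t : ℝ, 0 < t → t ≤ 1 → 0 ≤ G t := by
        intro t ht0 ht1
        set σt : B → ℝ := fun b => σs b + t * (σ' b - σs b) with hσtdef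
        have hσtm : σt ∈ simplex B := hσt_mem t ht0.le ht1
        have hpt_eq : pt t = gibbs βpl (Kf R T γ V s σt) (ρpl s) := by
          rw [hσtdef, hptdef]
        have hpt_mem : pt t ∈ simplex A := by rw [hpt_eq]; exact gibbs_mem hρplS
        have h1 : Ψf R T γ ρpl ρop βpl βop V s σs ≤ Ψf R T γ ρpl ρop βpl βop V s σt :=
          isMinOn_iff.mp hmin σt hσtm
        have h2 : Ψf R T γ ρpl ρop βpl βop V s σt
            = freeEnergy R T γ ρpl ρop βpl βop (pt t) σt s V := by
          rw [hpt_eq]; exact (att_pi σt).symm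
        have h3 : freeEnergy R T γ ρpl ρop βpl βop (pt t) σs s V
            ≤ Ψf R T γ ρpl ρop βpl βop V s σs :=
          (pi_greatest R T γ hβpl βop V s hρplS σs).2 ⟨pt t, hpt_mem, rfl⟩
        have h4 : freeEnergy R T γ ρpl ρop βpl βop (pt t) σs s V
            ≤ freeEnergy R T γ ρpl ρop βpl βop (pt t) σt s V := by linarith
        rw [freeEnergy_sigma, freeEnergy_sigma] at h4
        have h5 : kl σt (ρop s) ≤ (1 - t) * kl σs (ρop s) + t * kl σ' (ρop s) := by
          rw [hσtdef]
          exact kl_segment hρopS hσs hσ'_mem ht0.le ht1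
        have h6 : (∑ b, σt b * (∑ a, pt t a * Qf R T γ V s a b))
              - (∑ b, σs b * (∑ a, pt t a * Qf R T γ V s a b))
            = t * ∑ b, (σ' b - σs b) * (∑ a, pt t a * Qf R T γ V s a b) := by
          rw [← Finset.sum_sub_distrib, Finset.mul_sum]
          refine Finset.sum_congr rfl fun b _ => ?_
          simp only [hσtdef]
          ring
        have h8 : -(1/βop) * (kl σt (ρop s) - kl σs (ρop s))
            ≤ -(1/βop) * (t * (kl σ' (ρop s) - kl σs (ρop s))) :=
          mul_le_mul_of_nonneg_left (by linarith) hd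
        have h9 : 0 ≤ t * G t := by
          simp only [hGdef]
          nlinarith [h4, h6, h8]
        nlinarith [h9]
      have hσtcont : ∀ b, Continuous fun t : ℝ => σs b + t * (σ' b - σs b) := fun b =>
        continuous_const.add (continuous_id.mul continuous_const)
      have hKtcont : ∀ a, Continuous fun t : ℝ =>
          Kf R T γ V s (fun b => σs b + t * (σ' b - σs b)) a := fun a =>
        continuous_finset_sum _ fun b _ => (hσtcont b).mul continuous_const
      have hgZtpos : ∀ t : ℝ, 0 < gZ βpl
          (Kf R T γ V s (fun b => σs b + t * (σ' b - σs b))) (ρpl s) := fun t => gZ_pos hρplS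
      have hgZtcont : Continuous fun t : ℝ => gZ βpl
          (Kf R T γ V s (fun b => σs b + t * (σ' b - σs b))) (ρpl s) := by
        unfold gZ
        exact continuous_finset_sum _ fun a _ =>
          continuous_const.mul (Real.continuous_exp.comp (continuous_const.mul (hKtcont a)))
      have hptcont : ∀ a, Continuous fun t : ℝ => pt t a := by
        intro a
        simp only [hptdef]
        unfold gibbs
        exact (continuous_const.mul
            (Real.continuous_exp.comp (continuous_const.mul (hKtcont a)))).div
          hgZtcont (fun t => (hgZtpos t).ne')
      have hGcont : Continuous G := by
        simp only [hGdef]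
        refine Continuous.add ?_ continuous_const
        exact continuous_finset_sum _ fun b _ => continuous_const.mul
          (continuous_finset_sum _ fun a _ => (hptcont a).mul continuous_const)
      have hG0 : 0 ≤ G 0 := by
        have htend : Filter.Tendsto G (nhdsWithin 0 (Set.Ioi 0)) (nhds (G 0)) :=
          (hGcont.tendsto 0).mono_left nhdsWithin_le_nhds
        refine ge_of_tendsto htend ?_
        filter_upwards [Ioc_mem_nhdsGT one_pos] with t ht
        exact hGpos t ht.1 ht.2
      have hpt0 : pt 0 = ps := by
        have he : (fun b => σs b + 0 * (σ' b - σs b)) = σs := funext fun b => by ring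
        simp only [hptdef, he, hps]
      simp only [hGdef] at hG0
      rw [hpt0] at hG0
      have hsplit : ∑ b, (σ' b - σs b) * (∑ a, ps a * Qf R T γ V s a b)
          = (∑ b, σ' b * (∑ a, ps a * Qf R T γ V s a b))
            - ∑ b, σs b * (∑ a, ps a * Qf R T γ V s a b) := by
        rw [← Finset.sum_sub_distrib]
        exact Finset.sum_congr rfl fun b _ => by ring
      have key : freeEnergy R T γ ρpl ρop βpl βop ps σs s V
          ≤ freeEnergy R T γ ρpl ρop βpl βop ps σ' s V := by
        rw [freeEnergy_sigma, freeEnergy_sigma]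
        rw [hsplit] at hG0
        linarith
      have hInf : sInf (Ψf R T γ ρpl ρop βpl βop V s '' simplex B)
          = Ψf R T γ ρpl ρop βpl βop V s σs :=
        IsLeast.csInf_eq ⟨⟨σs, hσs, rfl⟩, by
          rintro y ⟨σ, hσ, rfl⟩; exact isMinOn_iff.mp hmin σ hσ⟩
      rw [hInf]
      have e1 : Ψf R T γ ρpl ρop βpl βop V s σs
          = freeEnergy R T γ ρpl ρop βpl βop ps σs s V := by
        rw [hps]; exact (att_pi σs).symm
      have e3 : Φf R T γ ρpl ρop βpl βop V s ps
          ≤ sSup (Φf R T γ ρpl ρop βpl βop V s '' simplex A) :=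
        le_csSup bddΦ ⟨ps, hps_mem, rfl⟩
      rw [e1]
      calc freeEnergy R T γ ρpl ρop βpl βop ps σs s V
          ≤ freeEnergy R T γ ρpl ρop βpl βop ps σ' s V := key
        _ = Φf R T γ ρpl ρop βpl βop V s ps := att_sigma
        _ ≤ _ := e3
  · -- βop > 0 : both sides are iterated suprema
    unfold extOp
    rw [if_pos hpos]
    apply le_antisymm
    · refine csSup_le (Set.Nonempty.image _ simplex_nonempty) ?_
      rintro y ⟨p, hp, rfl⟩
      have hΦp : Φf R T γ ρpl ρop βpl βop V s p
          = sSup ((fun σ => freeEnergy R T γ ρpl ρop βpl βop p σ s V) '' simplex B) := by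
        rw [← hΦeq p]; unfold extOp; rw [if_pos hpos]
      rw [hΦp]
      refine csSup_le (Set.Nonempty.image _ simplex_nonempty) ?_
      rintro y' ⟨σ, hσ, rfl⟩
      have h2 : freeEnergy R T γ ρpl ρop βpl βop p σ s V
          ≤ Ψf R T γ ρpl ρop βpl βop V s σ :=
        (pi_greatest R T γ hβpl βop V s hρplS σ).2 ⟨p, hp, rfl⟩
      exact h2.trans (le_csSup bddΨa ⟨σ, hσ, rfl⟩)
    · refine csSup_le (Set.Nonempty.image _ simplex_nonempty) ?_
      rintro y ⟨σ, hσ, rfl⟩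
      rw [← hΨeq σ]
      refine csSup_le (Set.Nonempty.image _ simplex_nonempty) ?_
      rintro y' ⟨p, hp, rfl⟩
      have h1 : freeEnergy R T γ ρpl ρop βpl βop p σ s V
          ≤ Φf R T γ ρpl ρop βpl βop V s p := by
        rw [← hΦeq p]
        unfold extOp
        rw [if_pos hpos]
        refine le_csSup ⟨Cbig R T γ ρpl ρop βpl βop V s, ?_⟩ ⟨σ, hσ, rfl⟩
        rintro y'' ⟨σ'', hσ'', rfl⟩
        exact (abs_le.1 (hFC p hp σ'' hσ'')).2
      exact h1.trans (le_csSup bddΦ ⟨p, hp, rfl⟩)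

lemma Bpl_le_add [Nonempty S] (R : S → A → B → ℝ) (T : S → A → B → S → ℝ) {γ : ℝ}
    (hγ0 : 0 ≤ γ) (hT0 : ∀ s a b s', 0 ≤ T s a b s') (hT1 : ∀ s a b, ∑ s', T s a b s' = 1)
    {ρpl : S → A → ℝ} {ρop : S → B → ℝ}
    (hρpl : ∀ s a, 0 < ρpl s a) (hρpl1 : ∀ s, ∑ a, ρpl s a = 1)
    (hρop : ∀ s b, 0 < ρop s b) (hρop1 : ∀ s, ∑ b, ρop s b = 1)
    (βpl βop : ℝ) (V W : S → ℝ) {D : ℝ}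
    (hD : ∀ s', |V s' - W s'| ≤ D) (s : S) :
    Bpl R T γ ρpl ρop βpl βop V s ≤ Bpl R T γ ρpl ρop βpl βop W s + γ * D := by
  have key : ∀ p ∈ simplex A, ∀ σ ∈ simplex B,
      freeEnergy R T γ ρpl ρop βpl βop p σ s V
        ≤ freeEnergy R T γ ρpl ρop βpl βop p σ s W + γ * D := by
    intro p hp σ hσ
    have per : ∀ a b, p a * σ b * (R s a b + γ * ∑ s', T s a b s' * V s')
        ≤ p a * σ b * (R s a b + γ * ∑ s', T s a b s' * W s') + p a * σ b * (γ * D) := by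
      intro a b
      have hTle : ∑ s', T s a b s' * V s' ≤ (∑ s', T s a b s' * W s') + D := by
        have he : ∑ s', T s a b s' * V s' - ∑ s', T s a b s' * W s'
            = ∑ s', T s a b s' * (V s' - W s') := by
          rw [← Finset.sum_sub_distrib]
          exact Finset.sum_congr rfl fun s' _ => by ring
        have hb : ∑ s', T s a b s' * (V s' - W s') ≤ D := by
          calc ∑ s', T s a b s' * (V s' - W s') ≤ ∑ s', T s a b s' * D :=
                Finset.sum_le_sum fun s' _ =>
                  mul_le_mul_of_nonneg_left (abs_le.1 (hD s')).2 (hT0 s a b s')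
            _ = D := by rw [← Finset.sum_mul, hT1 s a b, one_mul]
        linarith
      have hpσ : 0 ≤ p a * σ b := mul_nonneg (hp.1 a) (hσ.1 b)
      nlinarith [mul_le_mul_of_nonneg_left hTle (mul_nonneg hγ0 hpσ)]
    have hsum : ∑ a, ∑ b, p a * σ b * (R s a b + γ * ∑ s', T s a b s' * V s')
        ≤ ∑ a, ∑ b, (p a * σ b * (R s a b + γ * ∑ s', T s a b s' * W s')
            + p a * σ b * (γ * D)) :=
      Finset.sum_le_sum fun a _ => Finset.sum_le_sum fun b _ => per a b
    have hcst : ∑ a, ∑ b, p a * σ b * (γ * D) = γ * D := by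
      have e : ∀ a : A, ∑ b, p a * σ b * (γ * D) = p a * (γ * D) := fun a => by
        have : ∀ b : B, p a * σ b * (γ * D) = p a * (γ * D) * σ b := fun b => by ring
        rw [Finset.sum_congr rfl fun b _ => this b, ← Finset.mul_sum, hσ.2, mul_one]
      rw [Finset.sum_congr rfl fun a _ => e a, ← Finset.sum_mul, hp.2, one_mul]
    have hsplit : ∑ a, ∑ b, (p a * σ b * (R s a b + γ * ∑ s', T s a b s' * W s')
            + p a * σ b * (γ * D))
        = (∑ a, ∑ b, p a * σ b * (R s a b + γ * ∑ s', T s a b s' * W s')) + γ * D := by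
      have hdist : ∑ a, ∑ b, (p a * σ b * (R s a b + γ * ∑ s', T s a b s' * W s')
              + p a * σ b * (γ * D))
          = (∑ a, ∑ b, p a * σ b * (R s a b + γ * ∑ s', T s a b s' * W s'))
            + ∑ a, ∑ b, p a * σ b * (γ * D) := by
        rw [← Finset.sum_add_distrib]
        exact Finset.sum_congr rfl fun a _ => Finset.sum_add_distrib
      rw [hdist, hcst]
    rw [hsplit] at hsum
    unfold freeEnergy
    linarith
  unfold Bpl
  refine csSup_le_csSup_add simplex_nonempty ?_ ?_
  · refine ⟨Cbig R T γ ρpl ρop βpl βop W s, ?_⟩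
    rintro y ⟨p, hp, rfl⟩
    exact (abs_le.1 (abs_extOp_le (fun σ hσ =>
      freeEnergy_abs_le R T γ βpl βop s W (hρpl s) (hρpl1 s) (hρop s) (hρop1 s) hp hσ))).2
  · intro p hp
    refine extOp_le_extOp_add ?_ ?_ (fun σ hσ => key p hp σ hσ)
    · refine ⟨-(Cbig R T γ ρpl ρop βpl βop V s), ?_⟩
      rintro y ⟨σ, hσ, rfl⟩
      exact (abs_le.1 (freeEnergy_abs_le R T γ βpl βop s V
        (hρpl s) (hρpl1 s) (hρop s) (hρop1 s) hp hσ)).1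
    · refine ⟨Cbig R T γ ρpl ρop βpl βop W s, ?_⟩
      rintro y ⟨σ, hσ, rfl⟩
      exact (abs_le.1 (freeEnergy_abs_le R T γ βpl βop s W
        (hρpl s) (hρpl1 s) (hρop s) (hρop1 s) hp hσ)).2

end Game

end SoftAux

/-- (Corollary 2, Unique value) For `β_pl > 0` and `β_op ≠ 0`, any fixed point of the
player's operator `B_pl` coincides with any fixed point of the opponent's operator `B_op`:
the two-player soft Q-learning game has a unique value. -/
theorem soft_game_unique_value [Nonempty S] [Nonempty A] [Nonempty B]
    (R : S → A → B → ℝ) (T : S → A → B → S → ℝ) (γ : ℝ) (hγ0 : 0 ≤ γ) (hγ1 : γ < 1)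
    (hT0 : ∀ s a b s', 0 ≤ T s a b s') (hT1 : ∀ s a b, ∑ s', T s a b s' = 1)
    (ρpl : S → A → ℝ) (ρop : S → B → ℝ)
    (hρpl : ∀ s a, 0 < ρpl s a) (hρpl1 : ∀ s, ∑ a, ρpl s a = 1)
    (hρop : ∀ s b, 0 < ρop s b) (hρop1 : ∀ s, ∑ b, ρop s b = 1)
    (βpl βop : ℝ) (hβpl : 0 < βpl) (hβop : βop ≠ 0)
    (Vpl Vop : S → ℝ)
    (hVpl : ∀ s, Bpl R T γ ρpl ρop βpl βop Vpl s = Vpl s)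
    (hVop : ∀ s, Bop R T γ ρpl ρop βpl βop Vop s = Vop s) :
    ∀ s, Vpl s = Vop s := by
  classical
  set D := Finset.univ.sup' Finset.univ_nonempty (fun s => |Vpl s - Vop s|) with hDdef
  have hDle : ∀ s', |Vpl s' - Vop s'| ≤ D := fun s' =>
    Finset.le_sup' (fun s => |Vpl s - Vop s|) (Finset.mem_univ s')
  have hDle' : ∀ s', |Vop s' - Vpl s'| ≤ D := fun s' => by
    rw [abs_sub_comm]; exact hDle s'
  have hBplVop : ∀ s', Bpl R T γ ρpl ρop βpl βop Vop s' = Vop s' := fun s' => by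
    rw [SoftAux.Bpl_eq_Bop R T γ hρpl hρpl1 hρop hρop1 hβpl hβop Vop s', hVop s']
  have contr : ∀ s', |Vpl s' - Vop s'| ≤ γ * D := by
    intro s'
    have h1 := SoftAux.Bpl_le_add R T hγ0 hT0 hT1 hρpl hρpl1 hρop hρop1 βpl βop Vpl Vop hDle s'
    have h2 := SoftAux.Bpl_le_add R T hγ0 hT0 hT1 hρpl hρpl1 hρop hρop1 βpl βop Vop Vpl hDle' s'
    rw [hVpl s', hBplVop s'] at h1 h2
    rw [abs_le]
    constructor <;> linarith
  have hDγ : D ≤ γ * D := Finset.sup'_le _ _ fun s' _ => contr s'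
  intro s
  have hD0 : 0 ≤ D := le_trans (abs_nonneg _) (hDle s)
  have hDneg : D ≤ 0 := by nlinarith
  have habs : |Vpl s - Vop s| = 0 :=
    le_antisymm (le_trans (hDle s) hDneg) (abs_nonneg _)
  have := abs_eq_zero.mp habs
  linarith
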